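/- arXiv:1201.5592 — 3 statements merged into one kernel-verified Lean document; each statement's English description precedes it below -/
import Mathlib

section
/- If a : 𝕋 → ℂ is continuous and F : 𝕋 → M is ν-admissible, then the function aF : s ↦ a(s)·F(s) is ν-admissible, and ‖(aF)(P,S)‖_ν ≤ (sup_{s∈𝕋} |a(s)|)·‖F(P,S)‖_ν for every tagged partition (P,S). -/
open ContinuousLinearMap

/-- The unit circle `𝕋 ⊆ ℂ` as a type, with its Borel σ-algebra (induced from `ℂ`). -/
abbrev Torus : Type := ↥(Metric.sphere (0 : ℂ) 1)

/-- A finite Borel partition of `X`. -/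
structure BorelPartition (X : Type*) [MeasurableSpace X] where
  n : ℕ
  piece : Fin n → Set X
  meas : ∀ i, MeasurableSet (piece i)
  disj : Pairwise (Function.onFun Disjoint piece)
  cover : (⋃ i, piece i) = Set.univ

/-- A tagged finite Borel partition of `X`: a finite Borel partition together
with a tag `tag i ∈ piece i` for each piece. -/
structure TaggedPartition (X : Type*) [MeasurableSpace X] where
  n : ℕ
  piece : Fin n → Set X
  meas : ∀ i, MeasurableSet (piece i)
  disj : Pairwise (Function.onFun Disjoint piece)
  cover : (⋃ i, piece i) = Set.univ
  tag : Fin n → X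
  tag_mem : ∀ i, tag i ∈ piece i

/-- The (untagged) partition of a tagged partition `P` refines `Q`. -/
def TaggedPartition.Refines {X : Type*} [MeasurableSpace X]
    (P : TaggedPartition X) (Q : BorelPartition X) : Prop :=
  ∀ i : Fin P.n, ∃ j : Fin Q.n, P.piece i ⊆ Q.piece j

variable {M : Type*} [NormedAddCommGroup M] [InnerProductSpace ℂ M] [CompleteSpace M]

/-- An operator-valued measure on `X`: positive operator values on Borel sets and
weak countable additivity. -/
structure OpMeasure (X : Type*) [MeasurableSpace X] (M : Type*) [NormedAddCommGroup M]
    [InnerProductSpace ℂ M] [CompleteSpace M] where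
  toFun : Set X → (M →L[ℂ] M)
  pos : ∀ ω : Set X, MeasurableSet ω → (toFun ω).IsPositive
  countably_additive : ∀ (e f : M) (g : ℕ → Set X), (∀ k, MeasurableSet (g k)) →
    Pairwise (Function.onFun Disjoint g) →
    HasSum (fun k => (inner ℂ (toFun (g k) e) f : ℂ)) (inner ℂ (toFun (⋃ k, g k) e) f)

/-- `⟨F(P,S), G(P,S)⟩_ν := ∑_j ⟨ν(ω_j) F(s_j), G(s_j)⟩`. -/
noncomputable def pairSumNu {X : Type*} [MeasurableSpace X]
    (ν : Set X → (M →L[ℂ] M)) (P : TaggedPartition X) (F G : X → M) : ℂ :=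
  ∑ i : Fin P.n, (inner ℂ (ν (P.piece i) (F (P.tag i))) (G (P.tag i)) : ℂ)

/-- `‖F(P,S)‖_ν²`. -/
noncomputable def normSqNu {X : Type*} [MeasurableSpace X]
    (ν : Set X → (M →L[ℂ] M)) (P : TaggedPartition X) (F : X → M) : ℝ :=
  (pairSumNu ν P F F).re

/-- `‖F(P,S) − F(P′,S′)‖_ν²` (the mixed-refinement square distance). -/
noncomputable def crossSqNu {X : Type*} [MeasurableSpace X]
    (ν : Set X → (M →L[ℂ] M)) (P P' : TaggedPartition X) (F : X → M) : ℝ :=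
  ∑ i : Fin P.n, ∑ j : Fin P'.n,
    ((inner ℂ (ν (P.piece i ∩ P'.piece j) (F (P.tag i) - F (P'.tag j)))
        (F (P.tag i) - F (P'.tag j)) : ℂ)).re

/-- `F` is ν-admissible: the net of simple approximants `F(P,S)` is bounded and
Cauchy in the ν-seminorm. -/
def NuAdmissible {X : Type*} [MeasurableSpace X]
    (ν : Set X → (M →L[ℂ] M)) (F : X → M) : Prop :=
  (∃ C : ℝ, ∀ P : TaggedPartition X, Real.sqrt (normSqNu ν P F) ≤ C) ∧
  ∀ ε : ℝ, 0 < ε → ∃ Q : BorelPartition X, ∀ P P' : TaggedPartition X,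
    P.Refines Q → P'.Refines Q → Real.sqrt (crossSqNu ν P P' F) < ε


open ContinuousLinearMap

section Aux

variable {M : Type*} [NormedAddCommGroup M] [InnerProductSpace ℂ M] [CompleteSpace M]

lemma re_inner_smul_smul (T : M →L[ℂ] M) (c : ℂ) (v : M) :
    ((inner ℂ (T (c • v)) (c • v) : ℂ)).re
      = ‖c‖ ^ 2 * ((inner ℂ (T v) v : ℂ)).re := by
  rw [map_smul, inner_smul_left, inner_smul_right, ← mul_assoc,
    mul_comm (starRingEnd ℂ c) c, Complex.mul_conj]
  simp [Complex.sq_norm]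

variable {ι : Type*} [Fintype ι]

lemma qform_nonneg (T : ι → M →L[ℂ] M) (hT : ∀ i, (T i).IsPositive) (u : ι → M) :
    0 ≤ ∑ i, ((inner ℂ (T i (u i)) (u i) : ℂ)).re :=
  Finset.sum_nonneg fun i _ => (hT i).re_inner_nonneg_left _

lemma qform_triangle (T : ι → M →L[ℂ] M) (hT : ∀ i, (T i).IsPositive) (u w : ι → M) :
    Real.sqrt (∑ i, ((inner ℂ (T i (u i + w i)) (u i + w i) : ℂ)).re)
      ≤ Real.sqrt (∑ i, ((inner ℂ (T i (u i)) (u i) : ℂ)).re)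
        + Real.sqrt (∑ i, ((inner ℂ (T i (w i)) (w i) : ℂ)).re) := by
  classical
  set B : (ι → M) → (ι → M) → ℂ := fun x y => ∑ i, (inner ℂ (T i (x i)) (y i) : ℂ) with hB
  have hre : ∀ x : ι → M, (∑ i, ((inner ℂ (T i (x i)) (x i) : ℂ)).re) = (B x x).re :=
    fun x => (Complex.re_sum _ _).symm
  have hQpos : ∀ x : ι → M, 0 ≤ (B x x).re := by
    intro x; rw [← hre]; exact qform_nonneg T hT x
  have hsymm : ∀ i (x y : M), (inner ℂ (T i x) y : ℂ) = starRingEnd ℂ (inner ℂ (T i y) x) := by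
    intro i x y
    have h1 : (inner ℂ (T i x) y : ℂ) = inner ℂ x (T i y) :=
      ContinuousLinearMap.isSelfAdjoint_iff_isSymmetric.mp (hT i).isSelfAdjoint x y
    rw [h1, ← inner_conj_symm]
  have hBsymm : ∀ x y, B x y = starRingEnd ℂ (B y x) := by
    intro x y
    rw [hB]
    simp only [map_sum]
    exact Finset.sum_congr rfl fun i _ => hsymm i (x i) (y i)
  have hBexp : ∀ x y : ι → M, ∀ c : ℂ,
      B (fun i => c • x i + y i) (fun i => c • x i + y i)
        = starRingEnd ℂ c * c * B x x + starRingEnd ℂ c * B x y + c * B y x + B y y := by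
    intro x y c
    rw [hB]
    simp only [map_add, map_smul, inner_add_left, inner_add_right, inner_smul_left,
      inner_smul_right, mul_add, Finset.sum_add_distrib, Finset.mul_sum]
    ring
  have hrwu : (B w u).re = (B u w).re := by rw [hBsymm w u]; simp
  have key : ∀ t : ℝ, 0 ≤ (B w w).re * (t * t) + (2 * (B u w).re) * t + (B u u).re := by
    intro t
    have h0 : 0 ≤ (B (fun i => (t:ℂ) • w i + u i) (fun i => (t:ℂ) • w i + u i)).re :=
      hQpos _
    rw [hBexp w u (t:ℂ)] at h0
    simp only [Complex.conj_ofReal, Complex.add_re, Complex.mul_re, Complex.ofReal_re,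
      Complex.ofReal_im, Complex.mul_im] at h0
    rw [hrwu] at h0
    nlinarith [h0]
  have hdisc := discrim_le_zero key
  rw [discrim] at hdisc
  have hr2 : (B u w).re ^ 2 ≤ (B w w).re * (B u u).re := by nlinarith
  have hrle : (B u w).re ≤ Real.sqrt (B u u).re * Real.sqrt (B w w).re := by
    have h1 : (B u w).re ≤ |(B u w).re| := le_abs_self _
    have h2 : |(B u w).re| = Real.sqrt ((B u w).re ^ 2) := (Real.sqrt_sq_eq_abs _).symm
    have h3 : Real.sqrt ((B u w).re ^ 2) ≤ Real.sqrt ((B w w).re * (B u u).re) :=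
      Real.sqrt_le_sqrt hr2
    rw [Real.sqrt_mul (hQpos w), mul_comm] at h3
    linarith
  have hsum : (∑ i, ((inner ℂ (T i (u i + w i)) (u i + w i) : ℂ)).re)
      = (B u u).re + 2 * (B u w).re + (B w w).re := by
    rw [show (∑ i, ((inner ℂ (T i (u i + w i)) (u i + w i) : ℂ)).re)
        = (B (fun i => (1:ℂ) • u i + w i) (fun i => (1:ℂ) • u i + w i)).re from by
      rw [← hre]; simp]
    rw [hBexp u w 1]
    simp only [map_one, one_mul, Complex.add_re]
    rw [hrwu]
    ring
  rw [hsum, hre u, hre w]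
  have hfinal : (B u u).re + 2 * (B u w).re + (B w w).re
      ≤ (Real.sqrt (B u u).re + Real.sqrt (B w w).re) ^ 2 := by
    have e1 : (Real.sqrt (B u u).re + Real.sqrt (B w w).re) ^ 2
        = (B u u).re + 2 * (Real.sqrt (B u u).re * Real.sqrt (B w w).re) + (B w w).re := by
      rw [add_sq, Real.sq_sqrt (hQpos u), Real.sq_sqrt (hQpos w)]; ring
    rw [e1]; linarith
  calc Real.sqrt ((B u u).re + 2 * (B u w).re + (B w w).re)
      ≤ Real.sqrt ((Real.sqrt (B u u).re + Real.sqrt (B w w).re) ^ 2) :=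
        Real.sqrt_le_sqrt hfinal
    _ = Real.sqrt (B u u).re + Real.sqrt (B w w).re := Real.sqrt_sq (by positivity)

end Aux


lemma OpMeasure.empty_inner {X : Type*} [MeasurableSpace X] (ν : OpMeasure X M) (e f : M) :
    (inner ℂ (ν.toFun ∅ e) f : ℂ) = 0 := by
  have h := ν.countably_additive e f (fun _ => ∅) (fun _ => MeasurableSet.empty)
    (fun k l hkl => by simp [Function.onFun])
  rw [Set.iUnion_empty] at h
  exact tendsto_nhds_unique tendsto_const_nhds h.summable.tendsto_atTop_zero

lemma OpMeasure.sum_pieces {X : Type*} [MeasurableSpace X] (ν : OpMeasure X M)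
    (P : TaggedPartition X) {S : Set X} (hS : MeasurableSet S) (v w : M) :
    ∑ i : Fin P.n, (inner ℂ (ν.toFun (P.piece i ∩ S) v) w : ℂ) = inner ℂ (ν.toFun S v) w := by
  classical
  set g : ℕ → Set X := fun k => if h : k < P.n then P.piece ⟨k, h⟩ ∩ S else ∅ with hg
  have hmeas : ∀ k, MeasurableSet (g k) := by
    intro k
    by_cases h : k < P.n <;> simp [hg, h]
    exact (P.meas _).inter hS
  have hdisj : Pairwise (Function.onFun Disjoint g) := by
    intro k l hkl
    show Disjoint (g k) (g l)
    by_cases hk : k < P.n <;> by_cases hl : l < P.n <;> simp [hg, hk, hl]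
    have hne : (⟨k, hk⟩ : Fin P.n) ≠ ⟨l, hl⟩ := by
      simp only [ne_eq, Fin.mk.injEq]; exact hkl
    exact Disjoint.mono Set.inter_subset_left Set.inter_subset_left (P.disj hne)
  have hunion : (⋃ k, g k) = S := by
    apply Set.Subset.antisymm
    · refine Set.iUnion_subset fun k => ?_
      by_cases h : k < P.n <;> simp [hg, h]
    · intro x hx
      have hx2 : x ∈ ⋃ i, P.piece i := by rw [P.cover]; trivial
      obtain ⟨i, hi⟩ := Set.mem_iUnion.1 hx2
      refine Set.mem_iUnion.2 ⟨i.val, ?_⟩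
      simp [hg, i.isLt]
      exact ⟨hi, hx⟩
  have h1 := ν.countably_additive v w g hmeas hdisj
  rw [hunion] at h1
  have h2 : HasSum (fun k => (inner ℂ (ν.toFun (g k) v) w : ℂ))
      (∑ k ∈ Finset.range P.n, (inner ℂ (ν.toFun (g k) v) w : ℂ)) := by
    apply hasSum_sum_of_ne_finset_zero
    intro k hk
    have hnk : ¬ k < P.n := by simpa using hk
    simp [hg, hnk, ν.empty_inner]
  calc ∑ i : Fin P.n, (inner ℂ (ν.toFun (P.piece i ∩ S) v) w : ℂ)
      = ∑ i : Fin P.n, (inner ℂ (ν.toFun (g i.val) v) w : ℂ) := by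
        refine Finset.sum_congr rfl fun i _ => ?_
        congr 1
        simp [hg, i.isLt]
    _ = ∑ k ∈ Finset.range P.n, (inner ℂ (ν.toFun (g k) v) w : ℂ) :=
        Fin.sum_univ_eq_sum_range (fun k => (inner ℂ (ν.toFun (g k) v) w : ℂ)) P.n
    _ = inner ℂ (ν.toFun S v) w := (h1.unique h2).symm

lemma exists_osc_partition {η : ℝ} (hη : 0 < η) (a : Torus → ℂ) (ha : Continuous a) :
    ∃ Q : BorelPartition Torus, ∀ k : Fin Q.n, ∀ s ∈ Q.piece k, ∀ t ∈ Q.piece k,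
      ‖a s - a t‖ ≤ η := by
  classical
  have hu : UniformContinuous a := CompactSpace.uniformContinuous_of_continuous ha
  rw [Metric.uniformContinuous_iff] at hu
  obtain ⟨δ, hδ, hd⟩ := hu η hη
  have hcov : (Set.univ : Set Torus) ⊆ ⋃ x : Torus, Metric.ball x (δ/2) := by
    intro x _
    exact Set.mem_iUnion.2 ⟨x, Metric.mem_ball_self (by linarith)⟩
  obtain ⟨t, ht⟩ := isCompact_univ.elim_finite_subcover
    (fun x : Torus => Metric.ball x (δ/2)) (fun x => Metric.isOpen_ball) hcov
  set n := t.card with hn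
  set c : Fin n → Torus := fun i => (t.equivFin.symm i : Torus) with hc
  set f : ℕ → Set Torus := fun k => if h : k < n then Metric.ball (c ⟨k, h⟩) (δ/2) else ∅ with hf
  have hfm : ∀ k, MeasurableSet (f k) := by
    intro k
    by_cases h : k < n
    · simpa [hf, h] using measurableSet_ball
    · simp [hf, h]
  have hcov2 : ∀ x : Torus, ∃ i : Fin n, x ∈ Metric.ball (c i) (δ/2) := by
    intro x
    have := ht (Set.mem_univ x)
    rw [Set.mem_iUnion₂] at this
    obtain ⟨y, hy, hxy⟩ := this
    refine ⟨t.equivFin ⟨y, hy⟩, ?_⟩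
    have : c (t.equivFin ⟨y, hy⟩) = y := by simp [hc]
    rwa [this]
  refine ⟨⟨n, fun i => disjointed f i.val, fun i => MeasurableSet.disjointed hfm i.val,
    ?_, ?_⟩, ?_⟩
  · intro i j hij
    exact disjoint_disjointed f (fun h => hij (Fin.val_injective h))
  · rw [Set.eq_univ_iff_forall]
    intro x
    obtain ⟨i, hi⟩ := hcov2 x
    have hxf : x ∈ ⋃ k, f k := Set.mem_iUnion.2 ⟨i.val, by simp [hf, i.isLt]; exact hi⟩
    rw [← iUnion_disjointed] at hxf
    obtain ⟨k, hk⟩ := Set.mem_iUnion.1 hxf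
    have hkn : k < n := by
      by_contra h
      have : disjointed f k ⊆ ∅ := by
        refine (disjointed_subset f k).trans ?_
        simp [hf, h]
      exact this hk
    exact Set.mem_iUnion.2 ⟨⟨k, hkn⟩, hk⟩
  · intro k s hs tt htt
    have hsb : s ∈ Metric.ball (c k) (δ/2) := by
      have := (disjointed_subset f k.val) hs
      simpa [hf, k.isLt] using this
    have htb : tt ∈ Metric.ball (c k) (δ/2) := by
      have := (disjointed_subset f k.val) htt
      simpa [hf, k.isLt] using this
    have hdist : dist s tt < δ := by
      have h1 := Metric.mem_ball.1 hsb
      have h2 := Metric.mem_ball.1 htb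
      calc dist s tt ≤ dist s (c k) + dist (c k) tt := dist_triangle _ _ _
        _ = dist s (c k) + dist tt (c k) := by rw [dist_comm (c k) tt]
        _ < δ/2 + δ/2 := by linarith
        _ = δ := by ring
    have := hd hdist
    rw [Complex.dist_eq] at this
    exact this.le

lemma exists_common_refinement {X : Type*} [MeasurableSpace X] (Q1 Q2 : BorelPartition X) :
    ∃ Q : BorelPartition X, ∀ P : TaggedPartition X,
      P.Refines Q → P.Refines Q1 ∧ P.Refines Q2 := by
  classical
  refine ⟨⟨Q1.n * Q2.n,
    fun k => Q1.piece (finProdFinEquiv.symm k).1 ∩ Q2.piece (finProdFinEquiv.symm k).2,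
    fun k => (Q1.meas _).inter (Q2.meas _), ?_, ?_⟩, ?_⟩
  · intro k l hkl
    show Disjoint _ _
    have hne : (finProdFinEquiv.symm k) ≠ finProdFinEquiv.symm l :=
      fun h => hkl (finProdFinEquiv.symm.injective h)
    by_cases h1 : (finProdFinEquiv.symm k).1 = (finProdFinEquiv.symm l).1
    · have h2 : (finProdFinEquiv.symm k).2 ≠ (finProdFinEquiv.symm l).2 :=
        fun h2 => hne (Prod.ext h1 h2)
      exact Disjoint.mono Set.inter_subset_right Set.inter_subset_right (Q2.disj h2)
    · exact Disjoint.mono Set.inter_subset_left Set.inter_subset_left (Q1.disj h1)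
  · rw [Set.eq_univ_iff_forall]
    intro x
    have hx1 : x ∈ ⋃ i, Q1.piece i := by rw [Q1.cover]; trivial
    have hx2 : x ∈ ⋃ j, Q2.piece j := by rw [Q2.cover]; trivial
    obtain ⟨i, hi⟩ := Set.mem_iUnion.1 hx1
    obtain ⟨j, hj⟩ := Set.mem_iUnion.1 hx2
    refine Set.mem_iUnion.2 ⟨finProdFinEquiv (i, j), ?_⟩
    simp only [Equiv.symm_apply_apply]
    exact ⟨hi, hj⟩
  · intro P hP
    constructor <;> intro i <;> obtain ⟨k, hk⟩ := hP i
    · exact ⟨_, hk.trans Set.inter_subset_left⟩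
    · exact ⟨_, hk.trans Set.inter_subset_right⟩

lemma tags_close {X : Type*} [MeasurableSpace X] {P P' : TaggedPartition X}
    {Q : BorelPartition X} (hP : P.Refines Q) (hP' : P'.Refines Q) {i : Fin P.n}
    {j : Fin P'.n} (hne : (P.piece i ∩ P'.piece j).Nonempty) :
    ∃ k, P.tag i ∈ Q.piece k ∧ P'.tag j ∈ Q.piece k := by
  obtain ⟨k, hk⟩ := hP i
  obtain ⟨l, hl⟩ := hP' j
  obtain ⟨x, hx1, hx2⟩ := hne
  have hkl : k = l := by
    by_contra h
    exact Set.disjoint_left.1 (Q.disj h) (hk hx1) (hl hx2)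
  exact ⟨k, hk (P.tag_mem i), hkl ▸ hl (P'.tag_mem j)⟩

def trivPart (pt : Torus) : TaggedPartition Torus where
  n := 1
  piece := fun _ => Set.univ
  meas := fun _ => MeasurableSet.univ
  disj := fun i j hij => absurd (Subsingleton.elim i j) hij
  cover := Set.eq_univ_of_univ_subset fun x _ => Set.mem_iUnion.2 ⟨0, trivial⟩
  tag := fun _ => pt
  tag_mem := fun _ => trivial

/-- If `a : 𝕋 → ℂ` is continuous and `F` is ν-admissible, then `aF` is
ν-admissible and `‖(aF)(P,S)‖_ν ≤ (sup |a|) ⬝ ‖F(P,S)‖_ν` for every tagged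
partition. -/
theorem stmt15 (ν : OpMeasure Torus M)
    (a : Torus → ℂ) (ha : Continuous a)
    (F : Torus → M) (hF : NuAdmissible ν.toFun F) :
    NuAdmissible ν.toFun (fun s => a s • F s) ∧
    ∀ P : TaggedPartition Torus,
      Real.sqrt (normSqNu ν.toFun P (fun s => a s • F s)) ≤
        (⨆ s : Torus, ‖a s‖) * Real.sqrt (normSqNu ν.toFun P F) := by
  classical
  obtain ⟨pt⟩ : Nonempty Torus := inferInstance
  set Mb := ⨆ s : Torus, ‖a s‖ with hMbdef
  have hbdd : BddAbove (Set.range fun s : Torus => ‖a s‖) :=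
    (isCompact_range (continuous_norm.comp ha)).bddAbove
  have hle : ∀ s, ‖a s‖ ≤ Mb := fun s => le_ciSup hbdd s
  have hMb0 : 0 ≤ Mb := le_trans (norm_nonneg _) (hle pt)
  have normSq_eq : ∀ (P : TaggedPartition Torus) (G : Torus → M),
      normSqNu ν.toFun P G
        = ∑ i : Fin P.n, ((inner ℂ (ν.toFun (P.piece i) (G (P.tag i))) (G (P.tag i)) : ℂ)).re := by
    intro P G
    rw [normSqNu, pairSumNu, Complex.re_sum]
  have normSq_nonneg : ∀ (P : TaggedPartition Torus) (G : Torus → M),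
      0 ≤ normSqNu ν.toFun P G := by
    intro P G
    rw [normSq_eq]
    exact Finset.sum_nonneg fun i _ => (ν.pos _ (P.meas i)).re_inner_nonneg_left _
  have cross_eq : ∀ (P P' : TaggedPartition Torus) (G : Torus → M),
      crossSqNu ν.toFun P P' G
        = ∑ p : Fin P.n × Fin P'.n,
            ((inner ℂ (ν.toFun (P.piece p.1 ∩ P'.piece p.2) (G (P.tag p.1) - G (P'.tag p.2)))
              (G (P.tag p.1) - G (P'.tag p.2)) : ℂ)).re := by
    intro P P' G
    unfold crossSqNu
    rw [Fintype.sum_prod_type]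
  -- Part 2
  have main2 : ∀ P : TaggedPartition Torus,
      Real.sqrt (normSqNu ν.toFun P fun s => a s • F s)
        ≤ Mb * Real.sqrt (normSqNu ν.toFun P F) := by
    intro P
    have h1 : normSqNu ν.toFun P (fun s => a s • F s) ≤ Mb ^ 2 * normSqNu ν.toFun P F := by
      rw [normSq_eq, normSq_eq, Finset.mul_sum]
      refine Finset.sum_le_sum fun i _ => ?_
      rw [re_inner_smul_smul]
      have hnn : 0 ≤ ((inner ℂ (ν.toFun (P.piece i) (F (P.tag i))) (F (P.tag i)) : ℂ)).re :=
        (ν.pos _ (P.meas i)).re_inner_nonneg_left _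
      have h2 := hle (P.tag i)
      have hsq : ‖a (P.tag i)‖ ^ 2 ≤ Mb ^ 2 := by
        nlinarith [norm_nonneg (a (P.tag i))]
      exact mul_le_mul_of_nonneg_right hsq hnn
    calc Real.sqrt (normSqNu ν.toFun P fun s => a s • F s)
        ≤ Real.sqrt (Mb ^ 2 * normSqNu ν.toFun P F) := Real.sqrt_le_sqrt h1
      _ = Mb * Real.sqrt (normSqNu ν.toFun P F) := by
          rw [Real.sqrt_mul (by positivity), Real.sqrt_sq hMb0]
  refine ⟨⟨?_, ?_⟩, main2⟩
  · -- boundedness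
    obtain ⟨C, hC⟩ := hF.1
    exact ⟨Mb * C, fun P => (main2 P).trans (mul_le_mul_of_nonneg_left (hC P) hMb0)⟩
  · -- Cauchy
    intro ε hε
    obtain ⟨C, hC⟩ := hF.1
    have hC0 : 0 ≤ C := le_trans (Real.sqrt_nonneg _) (hC (trivPart pt))
    set D : ℝ := Mb + C + 1 with hDdef
    have hDpos : 0 < D := by rw [hDdef]; linarith
    set η : ℝ := ε / (2 * D) with hηdef
    have hηpos : 0 < η := by rw [hηdef]; positivity
    obtain ⟨Qa, hQa⟩ := exists_osc_partition hηpos a ha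
    obtain ⟨QF, hQF⟩ := hF.2 η hηpos
    obtain ⟨Q, hQ⟩ := exists_common_refinement Qa QF
    refine ⟨Q, fun P P' hP hP' => ?_⟩
    obtain ⟨hPa, hPF⟩ := hQ P hP
    obtain ⟨hP'a, hP'F⟩ := hQ P' hP'
    set T : Fin P.n × Fin P'.n → M →L[ℂ] M :=
      fun p => ν.toFun (P.piece p.1 ∩ P'.piece p.2) with hT
    have hTpos : ∀ p, (T p).IsPositive := fun p => ν.pos _ ((P.meas _).inter (P'.meas _))
    set x : Fin P.n × Fin P'.n → M :=
      fun p => a (P.tag p.1) • (F (P.tag p.1) - F (P'.tag p.2)) with hx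
    set y : Fin P.n × Fin P'.n → M :=
      fun p => (a (P.tag p.1) - a (P'.tag p.2)) • F (P'.tag p.2) with hy
    have hxy : ∀ p : Fin P.n × Fin P'.n,
        a (P.tag p.1) • F (P.tag p.1) - a (P'.tag p.2) • F (P'.tag p.2) = x p + y p := by
      intro p
      rw [hx, hy]
      simp only [smul_sub, sub_smul]
      abel
    have hcross1 : crossSqNu ν.toFun P P' (fun s => a s • F s)
        = ∑ p : Fin P.n × Fin P'.n, ((inner ℂ (T p (x p + y p)) (x p + y p) : ℂ)).re := by
      rw [cross_eq]
      exact Finset.sum_congr rfl fun p _ => by rw [← hxy p]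
    -- bound on the x part
    have hxbound : ∑ p : Fin P.n × Fin P'.n, ((inner ℂ (T p (x p)) (x p) : ℂ)).re
        ≤ Mb ^ 2 * crossSqNu ν.toFun P P' F := by
      rw [cross_eq, Finset.mul_sum]
      refine Finset.sum_le_sum fun p _ => ?_
      rw [hx, hT]
      rw [re_inner_smul_smul]
      have hnn : 0 ≤ ((inner ℂ (ν.toFun (P.piece p.1 ∩ P'.piece p.2)
          (F (P.tag p.1) - F (P'.tag p.2))) (F (P.tag p.1) - F (P'.tag p.2)) : ℂ)).re :=
        (ν.pos _ ((P.meas _).inter (P'.meas _))).re_inner_nonneg_left _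
      have h2 := hle (P.tag p.1)
      have hsq : ‖a (P.tag p.1)‖ ^ 2 ≤ Mb ^ 2 := by
        nlinarith [norm_nonneg (a (P.tag p.1))]
      exact mul_le_mul_of_nonneg_right hsq hnn
    -- the r-sum equals normSqNu of P'
    have hrsum : ∑ p : Fin P.n × Fin P'.n,
        ((inner ℂ (T p (F (P'.tag p.2))) (F (P'.tag p.2)) : ℂ)).re = normSqNu ν.toFun P' F := by
      rw [Fintype.sum_prod_type, Finset.sum_comm, normSq_eq]
      refine Finset.sum_congr rfl fun j _ => ?_
      rw [← Complex.re_sum]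
      congr 1
      simp only [hT]
      exact ν.sum_pieces P (P'.meas j) _ _
    -- bound on the y part
    have hybound : ∑ p : Fin P.n × Fin P'.n, ((inner ℂ (T p (y p)) (y p) : ℂ)).re
        ≤ η ^ 2 * (C ^ 2) := by
      have step1 : ∑ p : Fin P.n × Fin P'.n, ((inner ℂ (T p (y p)) (y p) : ℂ)).re
          ≤ η ^ 2 * normSqNu ν.toFun P' F := by
        rw [← hrsum, Finset.mul_sum]
        refine Finset.sum_le_sum fun p _ => ?_
        rw [hy, re_inner_smul_smul]
        by_cases hemp : (P.piece p.1 ∩ P'.piece p.2).Nonempty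
        · obtain ⟨k, hk1, hk2⟩ := tags_close hPa hP'a hemp
          have habs : ‖a (P.tag p.1) - a (P'.tag p.2)‖ ≤ η :=
            hQa k _ hk1 _ hk2
          have hnn : 0 ≤ ((inner ℂ (T p (F (P'.tag p.2))) (F (P'.tag p.2)) : ℂ)).re :=
            (hTpos p).re_inner_nonneg_left _
          have hsq : ‖a (P.tag p.1) - a (P'.tag p.2)‖ ^ 2 ≤ η ^ 2 := by
            nlinarith [norm_nonneg (a (P.tag p.1) - a (P'.tag p.2))]
          exact mul_le_mul_of_nonneg_right hsq hnn
        · have hempty : P.piece p.1 ∩ P'.piece p.2 = ∅ :=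
            Set.not_nonempty_iff_eq_empty.1 hemp
          have hz : ((inner ℂ (T p (F (P'.tag p.2))) (F (P'.tag p.2)) : ℂ)).re = 0 := by
            rw [hT]
            simp only [hempty]
            rw [ν.empty_inner]
            simp
          rw [hz]
          simp
      have step2 : normSqNu ν.toFun P' F ≤ C ^ 2 := by
        have h1 := hC P'
        have h2 := normSq_nonneg P' F
        nlinarith [Real.sq_sqrt h2, Real.sqrt_nonneg (normSqNu ν.toFun P' F)]
      calc ∑ p : Fin P.n × Fin P'.n, ((inner ℂ (T p (y p)) (y p) : ℂ)).re
          ≤ η ^ 2 * normSqNu ν.toFun P' F := step1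
        _ ≤ η ^ 2 * C ^ 2 := by nlinarith
    -- assemble
    have htri := qform_triangle T hTpos x y
    have h1 : Real.sqrt (∑ p : Fin P.n × Fin P'.n, ((inner ℂ (T p (x p)) (x p) : ℂ)).re)
        ≤ Mb * η := by
      have hlt := hQF P P' hPF hP'F
      calc Real.sqrt (∑ p : Fin P.n × Fin P'.n, ((inner ℂ (T p (x p)) (x p) : ℂ)).re)
          ≤ Real.sqrt (Mb ^ 2 * crossSqNu ν.toFun P P' F) := Real.sqrt_le_sqrt hxbound
        _ = Mb * Real.sqrt (crossSqNu ν.toFun P P' F) := by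
            rw [Real.sqrt_mul (by positivity), Real.sqrt_sq hMb0]
        _ ≤ Mb * η := mul_le_mul_of_nonneg_left hlt.le hMb0
    have h2 : Real.sqrt (∑ p : Fin P.n × Fin P'.n, ((inner ℂ (T p (y p)) (y p) : ℂ)).re)
        ≤ η * C := by
      calc Real.sqrt (∑ p : Fin P.n × Fin P'.n, ((inner ℂ (T p (y p)) (y p) : ℂ)).re)
          ≤ Real.sqrt (η ^ 2 * C ^ 2) := Real.sqrt_le_sqrt hybound
        _ = η * C := by
            rw [show η ^ 2 * C ^ 2 = (η * C) ^ 2 by ring, Real.sqrt_sq (by positivity)]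
    have hfin : Real.sqrt (crossSqNu ν.toFun P P' fun s => a s • F s) ≤ Mb * η + η * C := by
      rw [hcross1]
      exact htri.trans (add_le_add h1 h2)
    have hlast : Mb * η + η * C < ε := by
      have he : Mb * η + η * C = (Mb + C) * (ε / (2 * D)) := by rw [hηdef]; ring
      have hlt2 : Mb + C < 2 * D := by rw [hDdef]; linarith
      have hpos : 0 < ε / (2 * D) := by positivity
      calc Mb * η + η * C = (Mb + C) * (ε / (2 * D)) := he
        _ < 2 * D * (ε / (2 * D)) := mul_lt_mul_of_pos_right hlt2 hpos
        _ = ε := by field_simp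
    exact lt_of_le_of_lt hfin hlast
end

section
/- Let a, a′ : 𝕋 → ℂ be continuous, let ω, ω′ ⊆ 𝕋 be Borel sets, and let m ∈ M. Let μ_m be the finite positive Borel measure on 𝕋 defined by μ_m(E) := ⟨ν(E)m, m⟩ (a measure by the assumptions on ν). Define F := 1_ω·m and F′ := 1_{ω′}·m. Then the net (P,S) ↦ ⟨(a′F′)(P,S), (aF)(P,S)⟩_ν = ∑_j a′(s_j)·conj(a(s_j))·1_{ω′}(s_j)·1_ω(s_j)·⟨ν(ω_j)m, m⟩ converges, in the refinement-directed sense, to the integral ∫_{ω∩ω′} a′(s)·conj(a(s)) dμ_m(s). -/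
open ContinuousLinearMap

variable {M : Type*} [NormedAddCommGroup M] [InnerProductSpace ℂ M] [CompleteSpace M]

open MeasureTheory

lemma exists_partition_subord {X : Type*} [MeasurableSpace X] {ι : Type*} [Fintype ι]
    (c : ι → Set X) (hm : ∀ i, MeasurableSet (c i)) (hc : (⋃ i, c i) = Set.univ) :
    ∃ Q : BorelPartition X, ∀ j : Fin Q.n, ∃ i, Q.piece j ⊆ c i := by
  classical
  let e := (Fintype.equivFin ι).symm
  set k := Fintype.card ι
  let d : Fin k → Set X := fun j => c (e j)
  have hdm : ∀ j, MeasurableSet (d j) := fun j => hm _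
  have hdc : (⋃ j, d j) = Set.univ := by
    rw [← hc]
    exact e.surjective.iUnion_comp c
  refine ⟨⟨k, fun j => d j \ ⋃ l, ⋃ (_ : l < j), d l, ?_, ?_, ?_⟩, ?_⟩
  · intro j
    exact (hdm j).diff (MeasurableSet.iUnion fun l => MeasurableSet.iUnion fun _ => hdm l)
  · intro i j hij
    rcases lt_or_gt_of_ne hij with h | h
    · refine Set.disjoint_left.2 fun x hx hx' => hx'.2 ?_
      exact Set.mem_iUnion.2 ⟨i, Set.mem_iUnion.2 ⟨h, hx.1⟩⟩
    · refine Set.disjoint_left.2 fun x hx hx' => hx.2 ?_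
      exact Set.mem_iUnion.2 ⟨j, Set.mem_iUnion.2 ⟨h, hx'.1⟩⟩
  · apply Set.eq_univ_of_forall
    intro x
    have hx : ∃ j : Fin k, x ∈ d j := Set.mem_iUnion.1 (hdc ▸ Set.mem_univ x)
    let s : Finset (Fin k) := Finset.univ.filter fun j => x ∈ d j
    have hs : s.Nonempty := ⟨hx.choose, by simp [s, hx.choose_spec]⟩
    refine Set.mem_iUnion.2 ⟨s.min' hs, ?_, ?_⟩
    · have := s.min'_mem hs
      simpa [s] using this
    · intro hmem
      rcases Set.mem_iUnion.1 hmem with ⟨l, hl⟩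
      rcases Set.mem_iUnion.1 hl with ⟨hlt, hxl⟩
      exact absurd hlt (not_lt.2 (s.min'_le l (by simp [s, hxl])))
  · intro j
    exact ⟨e j, Set.diff_subset.trans (le_refl _)⟩

/-- With `F = 1_ω ⬝ m`, `F′ = 1_{ω′} ⬝ m` and `μ_m(E) = ⟨ν(E)m, m⟩`, the net
`(P,S) ↦ ⟨(a′F′)(P,S), (aF)(P,S)⟩_ν
  = ∑_j a′(s_j) conj(a(s_j)) 1_{ω′}(s_j) 1_ω(s_j) ⟨ν(ω_j)m, m⟩`
converges, in the refinement-directed sense, to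
`∫_{ω ∩ ω′} a′(s) conj(a(s)) dμ_m(s)`. -/
theorem stmt17 (ν : OpMeasure Torus M)
    (a a' : Torus → ℂ) (ha : Continuous a) (ha' : Continuous a')
    (ω ω' : Set Torus) (hω : MeasurableSet ω) (hω' : MeasurableSet ω')
    (m : M) (μm : Measure Torus) [IsFiniteMeasure μm]
    (hμm : ∀ E : Set Torus, MeasurableSet E →
      (((μm E).toReal : ℝ) : ℂ) = (inner ℂ (ν.toFun E m) m : ℂ)) :
    ∀ ε : ℝ, 0 < ε → ∃ Q : BorelPartition Torus,
      ∀ P : TaggedPartition Torus, P.Refines Q →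
        ‖((∑ i : Fin P.n,
              a' (P.tag i) * (starRingEnd ℂ) (a (P.tag i)) *
                ω'.indicator (fun _ => (1 : ℂ)) (P.tag i) *
                ω.indicator (fun _ => (1 : ℂ)) (P.tag i) *
                (inner ℂ (ν.toFun (P.piece i) m) m : ℂ)) -
            ∫ s in ω ∩ ω', a' s * (starRingEnd ℂ) (a s) ∂μm)‖ < ε := by
  classical
  intro ε hε
  set h : Torus → ℂ := fun s => a' s * (starRingEnd ℂ) (a s) with hh_def
  have hh : Continuous h := by
    show Continuous fun s => a' s * star (a s)
    exact ha'.mul (continuous_star.comp ha)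
  have hInt : Integrable h μm := by
    apply hh.integrable_of_hasCompactSupport
    exact IsCompact.of_isClosed_subset isCompact_univ (isClosed_tsupport h)
      (Set.subset_univ _)
  set T : ℝ := (μm Set.univ).toReal with hT_def
  have hT0 : 0 ≤ T := ENNReal.toReal_nonneg
  set ε' : ℝ := ε / (T + 1) with hε'_def
  have hε' : 0 < ε' := div_pos hε (by linarith)
  -- uniform continuity
  have hu : UniformContinuous h := CompactSpace.uniformContinuous_of_continuous hh
  obtain ⟨δ, hδ0, hδ⟩ := Metric.uniformContinuous_iff.1 hu ε' hε'
  -- finite ball cover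
  obtain ⟨t, ht⟩ := (isCompact_univ (X := Torus)).elim_finite_subcover
    (fun x : Torus => Metric.ball x (δ / 2)) (fun x => Metric.isOpen_ball)
    (fun x _ => Set.mem_iUnion.2 ⟨x, Metric.mem_ball_self (half_pos hδ0)⟩)
  -- covering family
  let c : (↥t × Bool × Bool) → Set Torus := fun p =>
    (Metric.ball (p.1 : Torus) (δ / 2) ∩ (if p.2.1 then ω else ωᶜ)) ∩
      (if p.2.2 then ω' else ω'ᶜ)
  have hcm : ∀ p, MeasurableSet (c p) := by
    intro p
    refine (Metric.isOpen_ball.measurableSet.inter ?_).inter ?_ <;>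
      [skip; skip] <;> rcases p with ⟨b, p1, p2⟩
    · cases p1 <;> simp [hω, hω.compl]
    · cases p2 <;> simp [hω', hω'.compl]
  have hcc : (⋃ p, c p) = Set.univ := by
    apply Set.eq_univ_of_forall
    intro x
    have hx := ht (Set.mem_univ x)
    rcases Set.mem_iUnion₂.1 hx with ⟨b, hb, hxb⟩
    refine Set.mem_iUnion.2 ⟨⟨⟨b, hb⟩, decide (x ∈ ω), decide (x ∈ ω')⟩, ⟨⟨hxb, ?_⟩, ?_⟩⟩
    · by_cases hxω : x ∈ ω <;> simp [hxω]
    · by_cases hxω' : x ∈ ω' <;> simp [hxω']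
  obtain ⟨Q, hQ⟩ := exists_partition_subord c hcm hcc
  refine ⟨Q, ?_⟩
  intro P hP
  -- structural facts about the pieces of P
  have hsub : ∀ i : Fin P.n, ∃ p, P.piece i ⊆ c p := by
    intro i
    obtain ⟨j, hj⟩ := hP i
    obtain ⟨p, hp⟩ := hQ j
    exact ⟨p, hj.trans hp⟩
  have hdiam : ∀ i : Fin P.n, ∀ x ∈ P.piece i, dist x (P.tag i) < δ := by
    intro i x hx
    obtain ⟨p, hp⟩ := hsub i
    have h1 : x ∈ Metric.ball (p.1 : Torus) (δ / 2) := (hp hx).1.1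
    have h2 : P.tag i ∈ Metric.ball (p.1 : Torus) (δ / 2) := (hp (P.tag_mem i)).1.1
    calc dist x (P.tag i) ≤ dist x (p.1 : Torus) + dist (p.1 : Torus) (P.tag i) :=
          dist_triangle _ _ _
      _ < δ / 2 + δ / 2 := by
          rw [dist_comm (p.1 : Torus)]
          exact add_lt_add h1 h2
      _ = δ := by ring
  have hstruct : ∀ i : Fin P.n,
      (P.tag i ∈ ω ∩ ω' → P.piece i ∩ (ω ∩ ω') = P.piece i) ∧
      (P.tag i ∉ ω ∩ ω' → P.piece i ∩ (ω ∩ ω') = ∅) := by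
    intro i
    obtain ⟨⟨b, p1, p2⟩, hp⟩ := hsub i
    have htag := hp (P.tag_mem i)
    cases p1 <;> cases p2 <;>
      simp only [c, if_pos rfl, if_neg Bool.false_ne_true] at hp htag
    · exact ⟨fun hmem => absurd hmem.1 htag.1.2,
        fun _ => Set.eq_empty_of_forall_notMem fun x hx => (hp hx.1).1.2 hx.2.1⟩
    · exact ⟨fun hmem => absurd hmem.1 htag.1.2,
        fun _ => Set.eq_empty_of_forall_notMem fun x hx => (hp hx.1).1.2 hx.2.1⟩
    · exact ⟨fun hmem => absurd hmem.2 htag.2,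
        fun _ => Set.eq_empty_of_forall_notMem fun x hx => (hp hx.1).2 hx.2.2⟩
    · refine ⟨fun _ => Set.inter_eq_self_of_subset_left fun x hx => ⟨(hp hx).1.2, (hp hx).2⟩,
        fun hmem => absurd ⟨htag.1.2, htag.2⟩ hmem⟩
  -- rewrite each summand
  set Ti : Fin P.n → Set Torus := fun i => P.piece i ∩ (ω ∩ ω') with hTi_def
  have hTim : ∀ i, MeasurableSet (Ti i) := fun i => (P.meas i).inter (hω.inter hω')
  have hterm : ∀ i : Fin P.n,
      a' (P.tag i) * (starRingEnd ℂ) (a (P.tag i)) *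
        ω'.indicator (fun _ => (1 : ℂ)) (P.tag i) *
        ω.indicator (fun _ => (1 : ℂ)) (P.tag i) *
        (inner ℂ (ν.toFun (P.piece i) m) m : ℂ)
      = h (P.tag i) * (((μm (Ti i)).toReal : ℝ) : ℂ) := by
    intro i
    rw [← hμm _ (P.meas i)]
    by_cases hmem : P.tag i ∈ ω ∩ ω'
    · rw [Set.indicator_of_mem hmem.2, Set.indicator_of_mem hmem.1,
        show Ti i = P.piece i from (hstruct i).1 hmem]
      simp only [hh_def]
      ring
    · have hTe : Ti i = ∅ := (hstruct i).2 hmem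
      have hμ0 : μm (Ti i) = 0 := by rw [hTe]; exact measure_empty
      rw [Set.mem_inter_iff, not_and_or] at hmem
      rcases hmem with hmem | hmem
      · rw [Set.indicator_of_notMem hmem, hμ0]
        simp
      · rw [Set.indicator_of_notMem hmem, hμ0]
        simp
  -- split the integral
  have hsplit : ∫ s in ω ∩ ω', h s ∂μm = ∑ i : Fin P.n, ∫ s in Ti i, h s ∂μm := by
    have hU : (⋃ i, Ti i) = ω ∩ ω' := by
      rw [hTi_def, ← Set.iUnion_inter, P.cover, Set.univ_inter]
    have hdisj : Pairwise (Function.onFun Disjoint Ti) := by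
      intro i j hij
      exact (P.disj hij).mono Set.inter_subset_left Set.inter_subset_left
    rw [← hU, integral_iUnion hTim hdisj (hInt.integrableOn), tsum_fintype]
  rw [hsplit, Finset.sum_congr rfl (fun i _ => hterm i), ← Finset.sum_sub_distrib]
  calc ‖∑ i : Fin P.n, (h (P.tag i) * (((μm (Ti i)).toReal : ℝ) : ℂ)
          - ∫ s in Ti i, h s ∂μm)‖
      ≤ ∑ i : Fin P.n, ‖h (P.tag i) * (((μm (Ti i)).toReal : ℝ) : ℂ)
          - ∫ s in Ti i, h s ∂μm‖ := norm_sum_le _ _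
    _ ≤ ∑ i : Fin P.n, ε' * (μm (P.piece i)).toReal := by
        apply Finset.sum_le_sum
        intro i _
        have heq : h (P.tag i) * (((μm (Ti i)).toReal : ℝ) : ℂ)
            - ∫ s in Ti i, h s ∂μm = ∫ s in Ti i, (h (P.tag i) - h s) ∂μm := by
          rw [integral_sub (integrableOn_const (C := h (P.tag i)) (measure_ne_top _ _))
            (hInt.integrableOn), setIntegral_const, Complex.real_smul, measureReal_def]
          ring
        rw [heq]
        have hbound : ‖∫ s in Ti i, (h (P.tag i) - h s) ∂μm‖
            ≤ ε' * (μm (Ti i)).toReal := by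
          apply norm_setIntegral_le_of_norm_le_const (measure_lt_top _ _)
          · intro x hx
            have hd : dist x (P.tag i) < δ := hdiam i x hx.1
            have := hδ (dist_comm x (P.tag i) ▸ hd)
            rw [dist_eq_norm] at this
            exact le_of_lt this
        refine hbound.trans ?_
        apply mul_le_mul_of_nonneg_left _ hε'.le
        exact ENNReal.toReal_mono (measure_ne_top _ _)
          (measure_mono Set.inter_subset_left)
    _ = ε' * ∑ i : Fin P.n, (μm (P.piece i)).toReal := by
        rw [Finset.mul_sum]
    _ = ε' * T := by
        congr 1
        rw [hT_def, ← P.cover, measure_iUnion P.disj P.meas, tsum_fintype,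
          ENNReal.toReal_sum (fun i _ => measure_ne_top _ _)]
    _ < ε := by
        have hTε : ε' * (T + 1) = ε := div_mul_cancel₀ ε (by linarith)
        nlinarith
end

section
/- For every q ∈ (0,1) there exists a function φ holomorphic on the annulus {z ∈ ℂ : q^{3/2} < |z| < q^{−1/2}} such that |φ(z)| = 1 for every z with |z| = 1, |φ(z)| = √q for every z with |z| = q, φ(√q) = 0, and φ(z) ≠ 0 for every z with q ≤ |z| ≤ 1 and z ≠ √q. -/
open Complex Filter

noncomputable def fq (q : ℝ) (x : ℂ) : ℂ := ∏' n : ℕ, (1 - (q : ℂ) ^ (2 * n) * x)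

lemma fq_factor_eq (q : ℝ) (x : ℂ) :
    (fun n : ℕ => 1 - (q : ℂ) ^ (2 * (n + 1)) * x)
      = fun n : ℕ => 1 - (q : ℂ) ^ (2 * n) * ((q : ℂ) ^ 2 * x) := by
  funext n
  rw [show 2 * (n + 1) = 2 * n + 2 by ring, pow_add]
  ring

lemma summable_log_fq {q : ℝ} (hq0 : 0 < q) (hq1 : q < 1) (x : ℂ)
    (h : ∀ n : ℕ, 1 - (q : ℂ) ^ (2 * n) * x ≠ 0) :
    Summable fun n : ℕ => Complex.log (1 - (q : ℂ) ^ (2 * n) * x) := by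
  obtain ⟨N, hN⟩ : ∃ N : ℕ, q ^ N * ‖x‖ ≤ 1 / 2 := by
    rcases eq_or_ne (‖x‖) 0 with hx | hx
    · exact ⟨0, by simp [hx]⟩
    · have hxpos : 0 < ‖x‖ := (norm_nonneg x).lt_of_ne (Ne.symm hx)
      obtain ⟨N, hN⟩ := exists_pow_lt_of_lt_one (div_pos (by norm_num) hxpos : (0:ℝ) < 1/2 / ‖x‖) hq1
      exact ⟨N, by rw [← le_div_iff₀ hxpos]; exact hN.le⟩
  rw [← summable_nat_add_iff N]
  have hq2 : 0 < q ^ 2 := by positivity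
  have hq21 : q ^ 2 < 1 := by nlinarith
  apply Summable.of_norm_bounded (g := fun n : ℕ => 3 / 4 * (q ^ 2) ^ n)
    ((summable_geometric_of_lt_one hq2.le hq21).mul_left _)
  intro n
  have habs : ∀ m : ℕ, ‖(q : ℂ) ^ m * x‖ = q ^ m * ‖x‖ := by
    intro m
    rw [norm_mul, norm_pow, Complex.norm_of_nonneg hq0.le]
  have key : q ^ (2 * (n + N)) * ‖x‖ ≤ (q ^ 2) ^ n * (1 / 2) := by
    have h1 : q ^ (2 * (n + N)) = (q ^ 2) ^ n * q ^ (2 * N) := by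
      rw [← pow_mul, ← pow_add]; ring_nf
    have h2 : q ^ (2 * N) ≤ q ^ N := pow_le_pow_of_le_one hq0.le hq1.le (by omega)
    calc q ^ (2 * (n + N)) * ‖x‖ = (q ^ 2) ^ n * (q ^ (2 * N) * ‖x‖) := by
          rw [h1]; ring
      _ ≤ (q ^ 2) ^ n * (q ^ N * ‖x‖) := by
          apply mul_le_mul_of_nonneg_left _ (by positivity)
          exact mul_le_mul_of_nonneg_right h2 (norm_nonneg x)
      _ ≤ (q ^ 2) ^ n * (1 / 2) := mul_le_mul_of_nonneg_left hN (by positivity)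
  have hle : ‖(q : ℂ) ^ (2 * (n + N)) * x‖ ≤ 1 / 2 := by
    rw [habs]
    refine key.trans ?_
    have : (q ^ 2) ^ n ≤ 1 := pow_le_one₀ hq2.le hq21.le
    nlinarith
  have hlog := Complex.norm_log_one_add_half_le_self (z := -((q : ℂ) ^ (2 * (n + N)) * x))
    (by rwa [norm_neg])
  rw [show (1 : ℂ) + -((q : ℂ) ^ (2 * (n + N)) * x) = 1 - (q : ℂ) ^ (2 * (n + N)) * x by ring]
    at hlog
  refine hlog.trans ?_
  rw [norm_neg, habs]
  nlinarith [key]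

lemma hasProd_fq {q : ℝ} (hq0 : 0 < q) (hq1 : q < 1) (x : ℂ)
    (h : ∀ n : ℕ, 1 - (q : ℂ) ^ (2 * n) * x ≠ 0) :
    HasProd (fun n : ℕ => 1 - (q : ℂ) ^ (2 * n) * x)
      (Complex.exp (∑' n : ℕ, Complex.log (1 - (q : ℂ) ^ (2 * n) * x))) := by
  have hs := (summable_log_fq hq0 hq1 x h).hasSum
  exact hs.cexp.congr_fun fun b => (Complex.exp_log (h b)).symm

lemma fq_ne_zero {q : ℝ} (hq0 : 0 < q) (hq1 : q < 1) (x : ℂ)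
    (h : ∀ n : ℕ, 1 - (q : ℂ) ^ (2 * n) * x ≠ 0) : fq q x ≠ 0 := by
  rw [fq, (hasProd_fq hq0 hq1 x h).tprod_eq]
  exact Complex.exp_ne_zero _

lemma fq_ne_zero_of_abs_lt_one {q : ℝ} (hq0 : 0 < q) (hq1 : q < 1) (x : ℂ)
    (h : ‖x‖ < 1) : fq q x ≠ 0 := by
  refine fq_ne_zero hq0 hq1 x fun n => ?_
  intro hc
  have h1 : (q : ℂ) ^ (2 * n) * x = 1 := by linear_combination -hc
  have h2 : ‖(q : ℂ) ^ (2 * n) * x‖ = 1 := by rw [h1, norm_one]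
  rw [norm_mul, norm_pow, Complex.norm_of_nonneg hq0.le] at h2
  have hq2n : q ^ (2 * n) ≤ 1 := pow_le_one₀ hq0.le hq1.le
  nlinarith [norm_nonneg x, pow_pos hq0 (2 * n)]

lemma multipliable_fq {q : ℝ} (hq0 : 0 < q) (hq1 : q < 1) (x : ℂ) :
    Multipliable (fun n : ℕ => 1 - (q : ℂ) ^ (2 * n) * x) := by
  by_cases h : ∀ n : ℕ, 1 - (q : ℂ) ^ (2 * n) * x ≠ 0
  · exact (hasProd_fq hq0 hq1 x h).multipliable
  · push_neg at h
    obtain ⟨k, hk⟩ := h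
    refine ⟨0, ?_⟩
    rw [HasProd]
    refine Tendsto.congr' ?_ tendsto_const_nhds
    filter_upwards [Filter.eventually_ge_atTop ({k} : Finset ℕ)] with s hs
    exact (Finset.prod_eq_zero (hs (Finset.mem_singleton_self k)) hk).symm

lemma fq_shift {q : ℝ} (hq0 : 0 < q) (hq1 : q < 1) (x : ℂ) :
    fq q x = (1 - x) * fq q ((q : ℂ) ^ 2 * x) := by
  have hm : Multipliable (fun n : ℕ => 1 - (q : ℂ) ^ (2 * (n + 1)) * x) := by
    rw [fq_factor_eq]
    exact multipliable_fq hq0 hq1 _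
  have h0 := tprod_eq_zero_mul' (f := fun n : ℕ => 1 - (q : ℂ) ^ (2 * n) * x) hm
  rw [fq, h0]
  congr 1
  · norm_num
  · rw [fq, ← fq_factor_eq]

lemma fq_one_eq_zero {q : ℝ} (hq0 : 0 < q) (hq1 : q < 1) : fq q (1 : ℂ) = 0 := by
  rw [fq_shift hq0 hq1]; simp

lemma fq_conj {q : ℝ} (hq0 : 0 < q) (hq1 : q < 1) (x : ℂ) :
    fq q ((starRingEnd ℂ) x) = (starRingEnd ℂ) (fq q x) := by
  have h := ((multipliable_fq hq0 hq1 x).hasProd.map (starRingEnd ℂ)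
    Complex.continuous_conj).tprod_eq
  simp only [fq]
  rw [← h]
  refine tprod_congr fun n => ?_
  simp [Function.comp, map_sub, map_mul, map_pow, Complex.conj_ofReal]

lemma fq_shift_iter {q : ℝ} (hq0 : 0 < q) (hq1 : q < 1) (N : ℕ) (x : ℂ) :
    fq q x = (∏ n ∈ Finset.range N, (1 - (q : ℂ) ^ (2 * n) * x)) * fq q ((q : ℂ) ^ (2 * N) * x) := by
  induction N with
  | zero => simp
  | succ N ih =>
    rw [ih, Finset.prod_range_succ, fq_shift hq0 hq1 ((q : ℂ) ^ (2 * N) * x)]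
    rw [show (q : ℂ) ^ 2 * ((q : ℂ) ^ (2 * N) * x) = (q : ℂ) ^ (2 * (N + 1)) * x by
      rw [show 2 * (N + 1) = 2 + 2 * N by ring, pow_add]; ring]
    ring

lemma fq_diff_half {q : ℝ} (hq0 : 0 < q) (hq1 : q < 1) :
    DifferentiableOn ℂ (fq q) (Metric.ball (0 : ℂ) (1 / 2)) := by
  have hfac : ∀ (n : ℕ) (x : ℂ), x ∈ Metric.ball (0 : ℂ) (1 / 2) →
      ‖(q : ℂ) ^ (2 * n) * x‖ < 1 / 2 := by
    intro n x hx
    rw [norm_mul, norm_pow, Complex.norm_of_nonneg hq0.le]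
    have h1 : q ^ (2 * n) ≤ 1 := pow_le_one₀ hq0.le hq1.le
    have h2 : ‖x‖ < 1 / 2 := by
      rw [Metric.mem_ball, dist_zero_right] at hx; exact hx
    nlinarith [norm_nonneg x, pow_pos hq0 (2 * n)]
  have hne : ∀ (x : ℂ), x ∈ Metric.ball (0 : ℂ) (1 / 2) →
      ∀ n : ℕ, 1 - (q : ℂ) ^ (2 * n) * x ≠ 0 := by
    intro x hx n h0
    have : ‖(q : ℂ) ^ (2 * n) * x‖ = 1 := by
      rw [show (q : ℂ) ^ (2 * n) * x = 1 by linear_combination -h0, norm_one]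
    linarith [hfac n x hx]
  have hd : DifferentiableOn ℂ
      (fun x : ℂ => ∑' n : ℕ, Complex.log (1 - (q : ℂ) ^ (2 * n) * x))
      (Metric.ball (0 : ℂ) (1 / 2)) := by
    have hq2 : 0 < q ^ 2 := by positivity
    have hq21 : q ^ 2 < 1 := by nlinarith
    apply differentiableOn_tsum_of_summable_norm
      (u := fun n : ℕ => 3 / 4 * (q ^ 2) ^ n)
      ((summable_geometric_of_lt_one hq2.le hq21).mul_left _)
    · intro n
      apply DifferentiableOn.clog
      · fun_prop
      · intro x hx
        refine Complex.mem_slitPlane_iff.2 (Or.inl ?_)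
        have h1 : ‖(q : ℂ) ^ (2 * n) * x‖ < 1 / 2 := hfac n x hx
        have h2 : ((q : ℂ) ^ (2 * n) * x).re ≤ ‖(q : ℂ) ^ (2 * n) * x‖ :=
          Complex.re_le_norm _
        simp only [Complex.sub_re, Complex.one_re]
        linarith
    · exact Metric.isOpen_ball
    · intro n x hx
      have h1 : ‖(q : ℂ) ^ (2 * n) * x‖ ≤ 1 / 2 := (hfac n x hx).le
      have hlog := Complex.norm_log_one_add_half_le_self (z := -((q : ℂ) ^ (2 * n) * x))
        (by rwa [norm_neg])
      rw [show (1 : ℂ) + -((q : ℂ) ^ (2 * n) * x) = 1 - (q : ℂ) ^ (2 * n) * x by ring] at hlog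
      refine hlog.trans ?_
      rw [norm_neg, norm_mul, norm_pow, Complex.norm_of_nonneg hq0.le]
      have h2 : ‖x‖ < 1 / 2 := by
        rw [Metric.mem_ball, dist_zero_right] at hx; exact hx
      have h3 : q ^ (2 * n) = (q ^ 2) ^ n := by rw [← pow_mul]
      rw [h3]
      nlinarith [norm_nonneg x, pow_pos hq2 n]
  refine DifferentiableOn.congr (hd.cexp) ?_
  intro x hx
  rw [fq, (hasProd_fq hq0 hq1 x (hne x hx)).tprod_eq]

lemma diff_finprod {q : ℝ} (N : ℕ) :
    Differentiable ℂ (fun x : ℂ => ∏ n ∈ Finset.range N, (1 - (q : ℂ) ^ (2 * n) * x)) := by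
  induction N with
  | zero => simpa using differentiable_const (1 : ℂ)
  | succ N ih =>
    have : (fun x : ℂ => ∏ n ∈ Finset.range (N + 1), (1 - (q : ℂ) ^ (2 * n) * x))
        = fun x : ℂ => (∏ n ∈ Finset.range N, (1 - (q : ℂ) ^ (2 * n) * x))
            * (1 - (q : ℂ) ^ (2 * N) * x) := by
      funext x; rw [Finset.prod_range_succ]
    rw [this]
    exact ih.mul (by fun_prop)

lemma fq_diff {q : ℝ} (hq0 : 0 < q) (hq1 : q < 1) : Differentiable ℂ (fq q) := by
  intro x₀
  obtain ⟨N, hN⟩ := exists_pow_lt_of_lt_one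
    (by positivity : (0:ℝ) < 1 / 2 / (‖x₀‖ + 1)) hq1
  have hqN1 : q ^ (2 * N) ≤ q ^ N := pow_le_pow_of_le_one hq0.le hq1.le (by omega)
  have hmem : (q : ℂ) ^ (2 * N) * x₀ ∈ Metric.ball (0 : ℂ) (1 / 2) := by
    rw [Metric.mem_ball, dist_zero_right, norm_mul, norm_pow,
      Complex.norm_of_nonneg hq0.le]
    have h1 : q ^ N * (‖x₀‖ + 1) < 1 / 2 := by
      rw [lt_div_iff₀ (by positivity : (0:ℝ) < ‖x₀‖ + 1)] at hN
      linarith [hN]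
    have h2 : q ^ (2 * N) * ‖x₀‖ ≤ q ^ N * (‖x₀‖ + 1) := by
      have := norm_nonneg x₀
      nlinarith [pow_pos hq0 N, pow_pos hq0 (2 * N)]
    linarith
  have heq : fq q = fun x : ℂ =>
      (∏ n ∈ Finset.range N, (1 - (q : ℂ) ^ (2 * n) * x)) * fq q ((q : ℂ) ^ (2 * N) * x) :=
    funext (fq_shift_iter hq0 hq1 N)
  rw [heq]
  apply DifferentiableAt.mul ((diff_finprod N) x₀)
  have hd2 : DifferentiableAt ℂ (fq q) ((q : ℂ) ^ (2 * N) * x₀) :=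
    (fq_diff_half hq0 hq1).differentiableAt (Metric.isOpen_ball.mem_nhds hmem)
  exact hd2.comp x₀ (by fun_prop)

/-- For every `q ∈ (0,1)` there is a function `φ` holomorphic on the annulus
`{q^{3/2} < |z| < q^{-1/2}}` which is unimodular on `|z| = 1`, of modulus `√q`
on `|z| = q`, vanishes at `√q`, and has no other zero in `{q ≤ |z| ≤ 1}`. -/
theorem stmt19 (q : ℝ) (hq : q ∈ Set.Ioo (0 : ℝ) 1) :
    ∃ φ : ℂ → ℂ,
      DifferentiableOn ℂ φ
        {z : ℂ | q ^ ((3 : ℝ) / 2) < ‖z‖ ∧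
          ‖z‖ < q ^ (-(1 : ℝ) / 2)} ∧
      (∀ z : ℂ, ‖z‖ = 1 → ‖φ z‖ = 1) ∧
      (∀ z : ℂ, ‖z‖ = q → ‖φ z‖ = Real.sqrt q) ∧
      φ ((Real.sqrt q : ℝ) : ℂ) = 0 ∧
      (∀ z : ℂ, q ≤ ‖z‖ → ‖z‖ ≤ 1 →
        z ≠ ((Real.sqrt q : ℝ) : ℂ) → φ z ≠ 0) := by
  obtain ⟨hq0, hq1⟩ := hq
  set s : ℝ := Real.sqrt q with hs_def
  have hs0 : 0 < s := Real.sqrt_pos.2 hq0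
  have hsq : s ^ 2 = q := Real.sq_sqrt hq0.le
  have hs1 : s < 1 := by nlinarith
  set c : ℂ := ((s : ℝ) : ℂ) with hc_def
  have hc0 : c ≠ 0 := by
    simp only [hc_def, ne_eq, Complex.ofReal_eq_zero]
    exact hs0.ne'
  have hcq : c ^ 2 = (q : ℂ) := by
    rw [hc_def, ← Complex.ofReal_pow, hsq]
  have hq4 : (q : ℂ) ^ 2 = c ^ 4 := by rw [← hcq]; ring
  have habsc : ‖c‖ = s := by
    rw [hc_def, Complex.norm_of_nonneg hs0.le]
  have habsq : ‖(q : ℂ)‖ = q := by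
    rw [Complex.norm_of_nonneg hq0.le]
  -- the function
  set Φ : ℂ → ℂ := fun z =>
    c * (fq q (c⁻¹ * z) * fq q (c ^ 5 * z⁻¹)) /
      (fq q (c * z) * fq q (c ^ 3 * z⁻¹)) with hΦ_def
  -- rpow facts
  have h32 : q ^ ((3 : ℝ) / 2) = q * s := by
    rw [show (3 : ℝ) / 2 = 1 + 1 / 2 by norm_num, Real.rpow_add hq0, Real.rpow_one,
      hs_def, Real.sqrt_eq_rpow]
  have hm12 : q ^ (-(1 : ℝ) / 2) = s⁻¹ := by
    rw [show -(1 : ℝ) / 2 = -(1 / 2) by norm_num, Real.rpow_neg hq0.le, hs_def,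
      Real.sqrt_eq_rpow]
  -- shift identities in terms of c
  have e1 : ∀ z : ℂ, fq q (c⁻¹ * z) = (1 - c⁻¹ * z) * fq q (c ^ 3 * z) := by
    intro z
    rw [fq_shift hq0 hq1 (c⁻¹ * z)]
    congr 2
    rw [hq4]
    field_simp
  have e3 : ∀ z : ℂ, fq q (c * z) = (1 - c * z) * fq q (c ^ 5 * z) := by
    intro z
    rw [fq_shift hq0 hq1 (c * z)]
    congr 2
    rw [hq4]
    ring
  -- the key identity on reflections across |z| = 1
  have hI : ∀ z : ℂ, z ≠ 0 →
      (q : ℂ) * ((fq q (c⁻¹ * z) * fq q (c ^ 5 * z⁻¹)) *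
        (fq q (c⁻¹ * z⁻¹) * fq q (c ^ 5 * z))) =
      (fq q (c * z) * fq q (c ^ 3 * z⁻¹)) * (fq q (c * z⁻¹) * fq q (c ^ 3 * z)) := by
    intro z hz0
    rw [e1 z, e1 z⁻¹, e3 z, e3 z⁻¹]
    have hsc : (q : ℂ) * ((1 - c⁻¹ * z) * (1 - c⁻¹ * z⁻¹)) =
        (1 - c * z) * (1 - c * z⁻¹) := by
      rw [← hcq]
      field_simp
      ring
    linear_combination
      (fq q (c ^ 3 * z) * fq q (c ^ 5 * z⁻¹) * fq q (c ^ 3 * z⁻¹) * fq q (c ^ 5 * z)) * hsc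
  -- conjugation symmetry
  have hconj : ∀ z : ℂ, Φ ((starRingEnd ℂ) z) = (starRingEnd ℂ) (Φ z) := by
    intro z
    simp only [hΦ_def, map_div₀, map_mul, map_inv₀, map_pow, ← fq_conj hq0 hq1,
      Complex.conj_ofReal, hc_def]
  -- nonvanishing of fq at small arguments
  have habs_mul : ∀ (k : ℕ) (z : ℂ), ‖c ^ k * z⁻¹‖ = s ^ k / ‖z‖ := by
    intro k z
    rw [norm_mul, norm_pow, habsc, norm_inv, div_eq_mul_inv]
  have habs_mul' : ∀ (k : ℕ) (z : ℂ), ‖c ^ k * z‖ = s ^ k * ‖z‖ := by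
    intro k z
    rw [norm_mul, norm_pow, habsc]
  refine ⟨Φ, ?_, ?_, ?_, ?_, ?_⟩
  · -- differentiability
    intro z hz
    obtain ⟨hz1, hz2⟩ := hz
    rw [h32] at hz1
    rw [hm12] at hz2
    have hzabs : 0 < ‖z‖ := lt_trans (by positivity) hz1
    have hz0 : z ≠ 0 := by
      intro h; rw [h, norm_zero] at hzabs; exact lt_irrefl 0 hzabs
    have hA : DifferentiableAt ℂ (fun z : ℂ => fq q (c⁻¹ * z)) z :=
      ((fq_diff hq0 hq1) _).comp z (by fun_prop)
    have hB : DifferentiableAt ℂ (fun z : ℂ => fq q (c ^ 5 * z⁻¹)) z :=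
      ((fq_diff hq0 hq1) _).comp z ((differentiableAt_inv hz0).const_mul _)
    have hC : DifferentiableAt ℂ (fun z : ℂ => fq q (c * z)) z :=
      ((fq_diff hq0 hq1) _).comp z (by fun_prop)
    have hD : DifferentiableAt ℂ (fun z : ℂ => fq q (c ^ 3 * z⁻¹)) z :=
      ((fq_diff hq0 hq1) _).comp z ((differentiableAt_inv hz0).const_mul _)
    have hCne : fq q (c * z) ≠ 0 := by
      apply fq_ne_zero_of_abs_lt_one hq0 hq1
      rw [norm_mul, habsc]
      calc s * ‖z‖ < s * s⁻¹ := by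
            exact mul_lt_mul_of_pos_left hz2 hs0
        _ = 1 := mul_inv_cancel₀ hs0.ne'
    have hDne : fq q (c ^ 3 * z⁻¹) ≠ 0 := by
      apply fq_ne_zero_of_abs_lt_one hq0 hq1
      rw [habs_mul]
      rw [div_lt_one hzabs]
      have hs3 : s ^ 3 = q * s := by nlinarith
      linarith
    exact (((hA.mul hB).const_mul c).div (hC.mul hD)
      (mul_ne_zero hCne hDne)).differentiableWithinAt
  · -- |z| = 1
    intro z hz1
    have hz0 : z ≠ 0 := by
      intro h; rw [h, norm_zero] at hz1; norm_num at hz1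
    have hcz : (starRingEnd ℂ) z = z⁻¹ := by
      apply eq_inv_of_mul_eq_one_left
      rw [mul_comm, Complex.mul_conj, Complex.normSq_eq_norm_sq, hz1]
      norm_num
    have hAne : fq q (c * z⁻¹) ≠ 0 := by
      apply fq_ne_zero_of_abs_lt_one hq0 hq1
      rw [norm_mul, habsc, norm_inv, hz1]; simpa using hs1
    have hBne : fq q (c ^ 3 * z) ≠ 0 := by
      apply fq_ne_zero_of_abs_lt_one hq0 hq1
      rw [habs_mul', hz1, mul_one]
      calc s ^ 3 ≤ s := by nlinarith
        _ < 1 := hs1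
    have hCne : fq q (c * z) ≠ 0 := by
      apply fq_ne_zero_of_abs_lt_one hq0 hq1
      rw [norm_mul, habsc, hz1]; simpa using hs1
    have hDne : fq q (c ^ 3 * z⁻¹) ≠ 0 := by
      apply fq_ne_zero_of_abs_lt_one hq0 hq1
      rw [habs_mul, hz1, div_one]
      calc s ^ 3 ≤ s := by nlinarith
        _ < 1 := hs1
    have hmul : Φ z * Φ z⁻¹ = 1 := by
      simp only [hΦ_def, inv_inv]
      rw [div_mul_div_comm, div_eq_one_iff_eq
        (mul_ne_zero (mul_ne_zero hCne hDne) (mul_ne_zero hAne hBne))]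
      linear_combination hI z hz0 + (fq q (c⁻¹ * z) * fq q (c ^ 5 * z⁻¹) *
        (fq q (c⁻¹ * z⁻¹) * fq q (c ^ 5 * z))) * hcq
    have hsq2 : ‖Φ z‖ ^ 2 = 1 := by
      have : ‖Φ z‖ ^ 2 = ‖Φ z * (starRingEnd ℂ) (Φ z)‖ := by
        rw [norm_mul, Complex.norm_conj]; ring
      rw [this, ← hconj z, hcz, hmul, norm_one]
    have hnn := norm_nonneg (Φ z)
    have hfac : (‖Φ z‖ - 1) * (‖Φ z‖ + 1) = 0 := by
      linear_combination hsq2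
    rcases mul_eq_zero.1 hfac with h | h
    · linarith
    · linarith
  · -- |z| = q
    intro z hzq
    have hz0 : z ≠ 0 := by
      intro h; rw [h, norm_zero] at hzq; exact hq0.ne (by linarith)
    have hcz : (starRingEnd ℂ) z = (q : ℂ) ^ 2 * z⁻¹ := by
      have hmc : z * (starRingEnd ℂ) z = (q : ℂ) ^ 2 := by
        rw [Complex.mul_conj, Complex.normSq_eq_norm_sq, hzq]
        push_cast
        ring
      field_simp
      linear_combination hmc
    -- rewrite the arguments of Φ ((q:ℂ)^2 * z⁻¹)
    have a1 : c⁻¹ * ((q : ℂ) ^ 2 * z⁻¹) = c ^ 3 * z⁻¹ := by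
      rw [hq4]; field_simp
    have a2 : c ^ 5 * ((q : ℂ) ^ 2 * z⁻¹)⁻¹ = c * z := by
      rw [hq4]; field_simp
    have a3 : c * ((q : ℂ) ^ 2 * z⁻¹) = c ^ 5 * z⁻¹ := by
      rw [hq4]; ring
    have a4 : c ^ 3 * ((q : ℂ) ^ 2 * z⁻¹)⁻¹ = c⁻¹ * z := by
      rw [hq4]; field_simp
    have hAne : fq q (c⁻¹ * z) ≠ 0 := by
      apply fq_ne_zero_of_abs_lt_one hq0 hq1
      rw [norm_mul, norm_inv, habsc, hzq]
      rw [show s⁻¹ * q = s by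
        rw [← hsq, pow_two, ← mul_assoc, inv_mul_cancel₀ hs0.ne', one_mul]]
      exact hs1
    have hBne : fq q (c ^ 5 * z⁻¹) ≠ 0 := by
      apply fq_ne_zero_of_abs_lt_one hq0 hq1
      rw [habs_mul, hzq, div_lt_one hq0]
      calc s ^ 5 < s ^ 2 := pow_lt_pow_right_of_lt_one₀ hs0 hs1 (by omega)
        _ = q := hsq
    have hCne : fq q (c * z) ≠ 0 := by
      apply fq_ne_zero_of_abs_lt_one hq0 hq1
      rw [norm_mul, habsc, hzq]
      nlinarith
    have hDne : fq q (c ^ 3 * z⁻¹) ≠ 0 := by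
      apply fq_ne_zero_of_abs_lt_one hq0 hq1
      rw [habs_mul, hzq, div_lt_one hq0]
      nlinarith
    have hmul : Φ z * Φ ((q : ℂ) ^ 2 * z⁻¹) = (q : ℂ) := by
      simp only [hΦ_def, a1, a2, a3, a4]
      rw [div_mul_div_comm, div_eq_iff
        (mul_ne_zero (mul_ne_zero hCne hDne) (mul_ne_zero hBne hAne))]
      linear_combination (fq q (c⁻¹ * z) * fq q (c ^ 5 * z⁻¹) * fq q (c * z) *
        fq q (c ^ 3 * z⁻¹)) * hcq
    have hsq2 : ‖Φ z‖ ^ 2 = q := by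
      have h1 : ‖Φ z‖ ^ 2 = ‖Φ z * (starRingEnd ℂ) (Φ z)‖ := by
        rw [norm_mul, Complex.norm_conj]; ring
      rw [h1, ← hconj z, hcz, hmul, habsq]
    have h5 : Real.sqrt (‖Φ z‖ ^ 2) = Real.sqrt q := by rw [hsq2]
    rw [Real.sqrt_sq (norm_nonneg _)] at h5
    exact h5
  · -- vanishing at √q
    show Φ c = 0
    simp only [hΦ_def]
    rw [inv_mul_cancel₀ hc0, fq_one_eq_zero hq0 hq1]
    simp
  · -- no other zeros
    intro z hzq hz1 hzc
    have hzabs : 0 < ‖z‖ := lt_of_lt_of_le hq0 hzq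
    have hz0 : z ≠ 0 := by
      intro h; rw [h, norm_zero] at hzabs; exact lt_irrefl 0 hzabs
    have hAne : fq q (c⁻¹ * z) ≠ 0 := by
      apply fq_ne_zero hq0 hq1
      intro n h0
      have h1 : (q : ℂ) ^ (2 * n) * (c⁻¹ * z) = 1 := by linear_combination -h0
      have habs1 : q ^ (2 * n) * (s⁻¹ * ‖z‖) = 1 := by
        have := congrArg (‖·‖) h1
        rwa [norm_mul, norm_mul, norm_pow, norm_inv, habsq, habsc, norm_one] at this
      have hn0 : n = 0 := by
        by_contra hn
        have hn1 : 1 ≤ n := Nat.one_le_iff_ne_zero.2 hn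
        have h2 : q ^ (2 * n) ≤ q ^ 2 := pow_le_pow_of_le_one hq0.le hq1.le (by omega)
        have h3 : s = q ^ (2 * n) * ‖z‖ := by
          field_simp at habs1
          linarith [habs1]
        have h4 : q ^ (2 * n) * ‖z‖ ≤ q ^ 2 := by
          calc q ^ (2 * n) * ‖z‖ ≤ q ^ (2 * n) * 1 :=
            mul_le_mul_of_nonneg_left hz1 (by positivity)
            _ ≤ q ^ 2 := by rw [mul_one]; exact h2
        have h5 : q ^ 2 < s := by nlinarith
        linarith [h3 ▸ h4]
      rw [hn0] at h1
      simp only [Nat.mul_zero, pow_zero, one_mul] at h1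
      apply hzc
      have hz_eq : z = c := by
        field_simp at h1
        exact h1
      exact hz_eq
    have hBne : fq q (c ^ 5 * z⁻¹) ≠ 0 := by
      apply fq_ne_zero_of_abs_lt_one hq0 hq1
      rw [habs_mul, div_lt_one hzabs]
      calc s ^ 5 < s ^ 2 := pow_lt_pow_right_of_lt_one₀ hs0 hs1 (by omega)
        _ = q := hsq
        _ ≤ ‖z‖ := hzq
    have hCne : fq q (c * z) ≠ 0 := by
      apply fq_ne_zero_of_abs_lt_one hq0 hq1
      rw [norm_mul, habsc]
      nlinarith
    have hDne : fq q (c ^ 3 * z⁻¹) ≠ 0 := by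
      apply fq_ne_zero_of_abs_lt_one hq0 hq1
      rw [habs_mul, div_lt_one hzabs]
      calc s ^ 3 < s ^ 2 := pow_lt_pow_right_of_lt_one₀ hs0 hs1 (by omega)
        _ = q := hsq
        _ ≤ ‖z‖ := hzq
    simp only [hΦ_def]
    exact div_ne_zero (mul_ne_zero hc0 (mul_ne_zero hAne hBne)) (mul_ne_zero hCne hDne)
end
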